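/- Smallest eigenvalue of T_L(1, 1/2): the least eigenvalue of the (L+1)×(L+1) matrix T_L(1, 1/2) equals 1 − cos(π/(2L+3)); moreover 1 − cos(π/(2L+3)) ≥ 2/(2L+3)², so every eigenvalue of T_L(1, 1/2) is at least 2/(2L+3)². -/

import Mathlib

open Matrix
open scoped Matrix

/-- The `(L+1)×(L+1)` real symmetric tridiagonal matrix `T_L(f,g)` with diagonal entries
`T₀₀ = f`, `T_LL = g`, `T_jj = 1` for `0 < j < L`, off-diagonal entries
`T_{j,j+1} = T_{j+1,j} = −1/2`, and all other entries `0`. -/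
noncomputable def triMat (L : ℕ) (f g : ℝ) : Matrix (Fin (L + 1)) (Fin (L + 1)) ℝ :=
  fun i j =>
    if i = j then (if (i : ℕ) = 0 then f else if (i : ℕ) = L then g else 1)
    else if (i : ℕ) + 1 = (j : ℕ) ∨ (j : ℕ) + 1 = (i : ℕ) then -(1 / 2) else 0

namespace TriAux

open Real

noncomputable def pad (L : ℕ) (v : Fin (L + 1) → ℝ) : ℕ → ℝ :=
  fun m => if h : m < L + 1 then v ⟨m, h⟩ else 0

lemma pad_coe (L : ℕ) (v : Fin (L + 1) → ℝ) (i : Fin (L + 1)) :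
    pad L v (i : ℕ) = v i := by
  simp [pad, i.isLt]

lemma pad_top (L : ℕ) (v : Fin (L + 1) → ℝ) : pad L v (L + 1) = 0 := by
  simp [pad]

noncomputable def dcoef (L : ℕ) (f g : ℝ) : ℕ → ℝ :=
  fun n => if n = 0 then f else if n = L then g else 1

lemma mulVec_apply (L : ℕ) (f g : ℝ) (v : Fin (L + 1) → ℝ) (i : Fin (L + 1)) :
    (triMat L f g *ᵥ v) i
      = dcoef L f g (i : ℕ) * pad L v (i : ℕ)
        - (1 / 2) * (if (i : ℕ) = 0 then 0 else pad L v ((i : ℕ) - 1))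
        - (1 / 2) * pad L v ((i : ℕ) + 1) := by
  obtain ⟨n, hnL⟩ := i
  set F : ℕ → ℝ := fun m =>
    (if m = n then dcoef L f g n * pad L v n else 0)
    + (if m = n + 1 then -(1 / 2) * pad L v (n + 1) else 0)
    + (if n ≠ 0 ∧ m = n - 1 then -(1 / 2) * pad L v (n - 1) else 0) with hF
  have hsummand : ∀ j : Fin (L + 1),
      triMat L f g ⟨n, hnL⟩ j * v j = F (j : ℕ) := by
    rintro ⟨m, hm⟩
    simp only [hF, triMat, pad, dcoef, Fin.mk.injEq]
    split_ifs <;> try omega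
    all_goals try casesm* _ ∧ _
    all_goals subst_vars
    all_goals ring
  have h1 : (triMat L f g *ᵥ v) ⟨n, hnL⟩ = ∑ j : Fin (L + 1), F (j : ℕ) := by
    simp only [mulVec, dotProduct]
    exact Finset.sum_congr rfl fun j _ => hsummand j
  rw [h1, Fin.sum_univ_eq_sum_range F (L + 1)]
  simp only [hF]
  rw [Finset.sum_add_distrib, Finset.sum_add_distrib]
  rw [Finset.sum_ite_eq' (Finset.range (L + 1)) n
      (fun _ => dcoef L f g n * pad L v n),
    Finset.sum_ite_eq' (Finset.range (L + 1)) (n + 1)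
      (fun _ => -(1 / 2) * pad L v (n + 1))]
  have ht3 : (∑ m ∈ Finset.range (L + 1),
      if n ≠ 0 ∧ m = n - 1 then -(1 / 2) * pad L v (n - 1) else 0)
      = if n = 0 then 0 else -(1 / 2) * pad L v (n - 1) := by
    by_cases hn0 : n = 0
    · simp [hn0]
    · rw [if_neg hn0]
      have hc : ∀ m, (if n ≠ 0 ∧ m = n - 1 then -(1 / 2) * pad L v (n - 1) else 0)
          = (if m = n - 1 then -(1 / 2) * pad L v (n - 1) else 0) := by
        intro m; by_cases h : m = n - 1 <;> simp [h, hn0]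
      rw [Finset.sum_congr rfl fun m _ => hc m,
        Finset.sum_ite_eq' (Finset.range (L + 1)) (n - 1)
          (fun _ => -(1 / 2) * pad L v (n - 1))]
      rw [if_pos (by simp; omega)]
  rw [ht3]
  rw [if_pos (by simp [hnL])]
  by_cases h2 : n + 1 ∈ Finset.range (L + 1)
  · rw [if_pos h2]
    by_cases hn0 : n = 0 <;> simp only [if_pos, if_neg, hn0, if_true, if_false,
      reduceIte] <;> ring
  · have hnL' : n = L := by simp at h2; omega
    rw [if_neg h2]
    have hp0 : pad L v (n + 1) = 0 := by rw [hnL']; exact pad_top L v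
    rw [hp0]
    by_cases hn0 : n = 0 <;> simp only [hn0, if_true, if_false, reduceIte] <;> ring

lemma dot_mulVec (L : ℕ) (f g : ℝ) (v : Fin (L + 1) → ℝ) :
    v ⬝ᵥ (triMat L f g *ᵥ v)
      = (∑ n ∈ Finset.range (L + 1), dcoef L f g n * pad L v n ^ 2)
        - ∑ j ∈ Finset.range L, pad L v j * pad L v (j + 1) := by
  have h1 : v ⬝ᵥ (triMat L f g *ᵥ v)
      = ∑ n ∈ Finset.range (L + 1), (dcoef L f g n * pad L v n ^ 2
          - (1 / 2) * (pad L v n * (if n = 0 then 0 else pad L v (n - 1)))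
          - (1 / 2) * (pad L v n * pad L v (n + 1))) := by
    rw [dotProduct, ← Fin.sum_univ_eq_sum_range (fun n => dcoef L f g n * pad L v n ^ 2
          - (1 / 2) * (pad L v n * (if n = 0 then 0 else pad L v (n - 1)))
          - (1 / 2) * (pad L v n * pad L v (n + 1))) (L + 1)]
    refine Finset.sum_congr rfl fun i _ => ?_
    rw [mulVec_apply, ← pad_coe L v i]
    ring
  rw [h1, Finset.sum_sub_distrib, Finset.sum_sub_distrib]
  have h2 : (∑ n ∈ Finset.range (L + 1),
      (1 / 2) * (pad L v n * (if n = 0 then 0 else pad L v (n - 1))))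
      = ∑ j ∈ Finset.range L, (1 / 2) * (pad L v (j + 1) * pad L v j) := by
    rw [Finset.sum_range_succ']
    simp
  have h3 : (∑ n ∈ Finset.range (L + 1), (1 / 2) * (pad L v n * pad L v (n + 1)))
      = ∑ j ∈ Finset.range L, (1 / 2) * (pad L v j * pad L v (j + 1)) := by
    rw [Finset.sum_range_succ, pad_top]
    simp
  rw [h2, h3, sub_sub, ← Finset.sum_add_distrib]
  congr 1
  refine Finset.sum_congr rfl fun j _ => ?_
  ring

noncomputable def th (L : ℕ) : ℝ := π / (2 * (L : ℝ) + 3)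

lemma th_pos (L : ℕ) : 0 < th L := by
  have := pi_pos
  have h3 : (0:ℝ) < 2 * (L : ℝ) + 3 := by positivity
  exact div_pos this h3

lemma th_key (L : ℕ) : (2 * (L : ℝ) + 3) * th L = π := by
  have h3 : (2 * (L : ℝ) + 3) ≠ 0 := by positivity
  unfold th
  field_simp

lemma sin_th_pos (L : ℕ) (n : ℕ) (hn : n ≤ L) :
    0 < Real.sin (((n : ℝ) + 1) * th L) := by
  apply Real.sin_pos_of_pos_of_lt_pi
  · have h1 := th_pos L
    have h2 : (0:ℝ) < (n : ℝ) + 1 := by positivity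
    positivity
  · rw [← th_key L]
    apply mul_lt_mul_of_pos_right _ (th_pos L)
    have : (n : ℝ) ≤ L := by exact_mod_cast hn
    linarith

lemma sin_rec (L : ℕ) (x : ℝ) :
    Real.sin (x * th L) + Real.sin ((x + 2) * th L)
      = 2 * Real.cos (th L) * Real.sin ((x + 1) * th L) := by
  have h1 : x * th L = (x + 1) * th L - th L := by ring
  have h2 : (x + 2) * th L = (x + 1) * th L + th L := by ring
  rw [h1, h2, Real.sin_add, Real.sin_sub]
  ring

lemma sin_bdry (L : ℕ) :
    Real.sin (((L : ℝ) + 2) * th L) = Real.sin (((L : ℝ) + 1) * th L) := by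
  have h : ((L : ℝ) + 2) * th L = π - ((L : ℝ) + 1) * th L := by
    rw [← th_key L]; ring
  rw [h, Real.sin_pi_sub]

lemma sin_bdry2 (L : ℕ) : Real.sin ((L : ℝ) * th L)
    = (2 * Real.cos (th L) - 1) * Real.sin (((L : ℝ) + 1) * th L) := by
  have := sin_rec L (L : ℝ)
  rw [sin_bdry L] at this
  linarith [this]

lemma sin_first (L : ℕ) :
    Real.sin (2 * th L) = 2 * Real.cos (th L) * Real.sin (th L) := by
  rw [Real.sin_two_mul]; ring

lemma numeric_aux (N : ℝ) (hN5 : 5 ≤ N) : 2 / N ^ 2 ≤ 1 - Real.cos (π / N) := by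
  have hNpos : (0:ℝ) < N := by linarith
  have hπ1 : (3.14:ℝ) < π := by linarith [pi_gt_d6]
  have hπ2 : π < 3.15 := by linarith [pi_lt_d2]
  set t := π / (2 * N) with ht
  have htN : t * N = π / 2 := by
    rw [ht]; field_simp
  have hx0 : 0 < t := by rw [ht]; positivity
  have ht' : t ≤ 0.315 := by
    rw [ht, div_le_iff₀ (by positivity)]
    nlinarith
  have hx1 : t ≤ 1 := by linarith
  have hsin := Real.sin_gt_sub_cube hx0
  have hkey : 1 / N ≤ Real.sin t := by
    have h8 : 1 / N ≤ t - t ^ 3 / 4 := by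
      rw [div_le_iff₀ hNpos]
      have e1 : (t - t ^ 3 / 4) * N = t * N - t ^ 2 * (t * N) / 4 := by ring
      rw [e1, htN]
      nlinarith
    linarith [pow_pos hx0 3]
  have hcos : Real.cos (π / N) = 1 - 2 * Real.sin t ^ 2 := by
    have h2t : π / N = 2 * t := by rw [ht]; ring
    rw [h2t, Real.cos_two_mul]
    have := Real.sin_sq_add_cos_sq t
    linarith
  rw [hcos]
  have h1N : (0:ℝ) < 1 / N := by positivity
  have hsq : (1 / N) ^ 2 ≤ Real.sin t ^ 2 := by nlinarith
  have e2 : 2 / N ^ 2 = 2 * (1 / N) ^ 2 := by ring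
  rw [e2]
  nlinarith

/-- the eigenvector for the least eigenvalue -/
noncomputable def evec (L : ℕ) : Fin (L + 1) → ℝ :=
  fun i => Real.sin ((((i : ℕ) : ℝ) + 1) * th L)

lemma evec_pad (L : ℕ) (m : ℕ) (hm : m < L + 1) :
    pad L (evec L) m = Real.sin (((m : ℝ) + 1) * th L) := by
  simp [pad, evec, hm]

lemma evec_ne (L : ℕ) : evec L ≠ 0 := by
  intro h
  have hp := sin_th_pos L 0 (Nat.zero_le L)
  have h0 := congrFun h 0
  simp [evec] at h0
  simp at hp
  exact absurd h0 (ne_of_gt hp)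

lemma evec_eig (L : ℕ) (hL : 1 ≤ L) :
    triMat L 1 (1 / 2) *ᵥ evec L = (1 - Real.cos (th L)) • evec L := by
  funext i
  rw [mulVec_apply]
  obtain ⟨n, hn⟩ := i
  simp only [Pi.smul_apply, smul_eq_mul]
  have hev : evec L ⟨n, hn⟩ = Real.sin (((n : ℝ) + 1) * th L) := by
    simp [evec]
  rw [hev]
  by_cases h0 : n = 0
  · subst h0
    rw [if_pos rfl]
    have hd : dcoef L 1 (1 / 2) 0 = 1 := by simp [dcoef]
    rw [hd, evec_pad L 0 hn, evec_pad L 1 (by omega)]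
    push_cast
    rw [show ((1 : ℝ) + 1) = 2 by norm_num]
    have hf := sin_first L
    norm_num
    linear_combination (-(1 / 2)) * hf
  · rw [if_neg h0]
    by_cases hLn : n = L
    · subst hLn
      have hd : dcoef n 1 (1 / 2) n = 1 / 2 := by
        simp [dcoef, h0]
      rw [hd, evec_pad n n hn, evec_pad n (n - 1) (by omega)]
      have hp : pad n (evec n) (n + 1) = 0 := pad_top n (evec n)
      rw [hp]
      have hcc : ((n - 1 : ℕ) : ℝ) + 1 = (n : ℝ) := by
        have h1 : (1:ℕ) ≤ n := by omega
        push_cast [Nat.cast_sub h1]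
        ring
      rw [hcc]
      have hb := sin_bdry2 n
      linear_combination (-(1 / 2)) * hb
    · have hd : dcoef L 1 (1 / 2) n = 1 := by simp [dcoef, h0, hLn]
      rw [hd, evec_pad L n hn, evec_pad L (n - 1) (by omega),
        evec_pad L (n + 1) (by omega)]
      have hc : ((n - 1 : ℕ) : ℝ) + 1 = (n : ℝ) := by
        have h1 : (1:ℕ) ≤ n := by omega
        push_cast [Nat.cast_sub h1]
        ring
      rw [hc]
      push_cast
      rw [show ((n : ℝ) + 1 + 1) = (n : ℝ) + 2 by ring]
      have hr := sin_rec L (n : ℝ)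
      linear_combination (-(1 / 2)) * hr

lemma edge_ineq (a b x y : ℝ) (ha : 0 < a) (hb : 0 < b) :
    x * y ≤ b / (2 * a) * x ^ 2 + a / (2 * b) * y ^ 2 := by
  have key : b / (2 * a) * x ^ 2 + a / (2 * b) * y ^ 2 - x * y
      = (b * x - a * y) ^ 2 / (2 * a * b) := by
    field_simp
    ring
  have h2 : (0:ℝ) ≤ (b * x - a * y) ^ 2 / (2 * a * b) := by positivity
  linarith [key ▸ h2]

noncomputable def ws (L n : ℕ) : ℝ := Real.sin (((n : ℝ) + 1) * th L)

lemma ws_pos (L n : ℕ) (hn : n ≤ L) : 0 < ws L n := sin_th_pos L n hn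

lemma ws_rec (L n : ℕ) (h1 : 1 ≤ n) :
    ws L (n - 1) + ws L (n + 1) = 2 * Real.cos (th L) * ws L n := by
  unfold ws
  have hc : ((n - 1 : ℕ) : ℝ) + 1 = (n : ℝ) := by
    push_cast [Nat.cast_sub h1]; ring
  rw [hc]
  push_cast
  rw [show ((n : ℝ) + 1 + 1) = (n : ℝ) + 2 by ring]
  exact sin_rec L (n : ℝ)

lemma ws_one (L : ℕ) : ws L 1 = 2 * Real.cos (th L) * ws L 0 := by
  unfold ws
  push_cast
  rw [show ((1 : ℝ) + 1) = 2 by norm_num, show ((0 : ℝ) + 1) = 1 by norm_num,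
    one_mul]
  exact sin_first L

lemma ws_last (L : ℕ) (hL : 1 ≤ L) :
    ws L (L - 1) = (2 * Real.cos (th L) - 1) * ws L L := by
  unfold ws
  have hc : ((L - 1 : ℕ) : ℝ) + 1 = (L : ℝ) := by
    push_cast [Nat.cast_sub hL]; ring
  rw [hc]
  exact sin_bdry2 L

lemma qf_ge (L : ℕ) (hL : 1 ≤ L) (v : Fin (L + 1) → ℝ) :
    (1 - Real.cos (th L)) * (∑ n ∈ Finset.range (L + 1), pad L v n ^ 2)
      ≤ v ⬝ᵥ (triMat L 1 (1 / 2) *ᵥ v) := by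
  set c := Real.cos (th L) with hc
  have hwpos : ∀ n, n ≤ L → 0 < ws L n := fun n hn => ws_pos L n hn
  rw [dot_mulVec]
  have hsplit : ∀ n, n < L + 1 →
      dcoef L 1 (1 / 2) n - (1 - c)
        = (if n = L then 0 else ws L (n + 1) / (2 * ws L n))
          + (if n = 0 then 0 else ws L (n - 1) / (2 * ws L n)) := by
    intro n hn
    by_cases h0 : n = 0
    · subst h0
      rw [if_neg (by omega), if_pos rfl, add_zero]
      have hd : dcoef L 1 (1 / 2) 0 = 1 := by simp [dcoef]
      rw [hd, zero_add, ws_one]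
      have hw0 : 0 < ws L 0 := hwpos 0 (by omega)
      field_simp
      ring
    · by_cases hLn : n = L
      · rw [if_pos hLn, if_neg h0, zero_add]
        have hd : dcoef L 1 (1 / 2) n = 1 / 2 := by
          simp only [dcoef]; rw [if_neg h0, if_pos hLn]
        have hwn : 0 < ws L n := hwpos n (by omega)
        have hlast : ws L (n - 1) = (2 * c - 1) * ws L n := by
          rw [hLn]; exact ws_last L hL
        rw [hd, hlast]
        field_simp
        ring
      · rw [if_neg hLn, if_neg h0]
        have hd : dcoef L 1 (1 / 2) n = 1 := by simp [dcoef, h0, hLn]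
        rw [hd]
        have hwn : 0 < ws L n := hwpos n (by omega)
        have hne : ws L n ≠ 0 := hwn.ne'
        have hrec := ws_rec L n (by omega)
        rw [← hc] at hrec
        field_simp
        linear_combination -hrec
  have e1 : (∑ n ∈ Finset.range (L + 1), dcoef L 1 (1 / 2) n * pad L v n ^ 2)
      - (1 - c) * (∑ n ∈ Finset.range (L + 1), pad L v n ^ 2)
      = ∑ j ∈ Finset.range L,
          (ws L (j + 1) / (2 * ws L j) * pad L v j ^ 2
            + ws L j / (2 * ws L (j + 1)) * pad L v (j + 1) ^ 2) := by
    rw [Finset.mul_sum, ← Finset.sum_sub_distrib]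
    have e2 : ∀ n ∈ Finset.range (L + 1),
        dcoef L 1 (1 / 2) n * pad L v n ^ 2 - (1 - c) * pad L v n ^ 2
        = (if n = L then 0 else ws L (n + 1) / (2 * ws L n)) * pad L v n ^ 2
          + (if n = 0 then 0 else ws L (n - 1) / (2 * ws L n)) * pad L v n ^ 2 := by
      intro n hn
      rw [Finset.mem_range] at hn
      have hs := hsplit n hn
      linear_combination pad L v n ^ 2 * hs
    rw [Finset.sum_congr rfl e2, Finset.sum_add_distrib]
    have e3 : (∑ n ∈ Finset.range (L + 1),
        (if n = L then 0 else ws L (n + 1) / (2 * ws L n)) * pad L v n ^ 2)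
        = ∑ j ∈ Finset.range L, ws L (j + 1) / (2 * ws L j) * pad L v j ^ 2 := by
      rw [Finset.sum_range_succ, if_pos rfl, zero_mul, add_zero]
      refine Finset.sum_congr rfl fun j hj => ?_
      rw [Finset.mem_range] at hj
      rw [if_neg (by omega)]
    have e4 : (∑ n ∈ Finset.range (L + 1),
        (if n = 0 then 0 else ws L (n - 1) / (2 * ws L n)) * pad L v n ^ 2)
        = ∑ j ∈ Finset.range L, ws L j / (2 * ws L (j + 1)) * pad L v (j + 1) ^ 2 := by
      rw [Finset.sum_range_succ']
      have hcong : ∀ j ∈ Finset.range L,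
          (if j + 1 = 0 then 0 else ws L (j + 1 - 1) / (2 * ws L (j + 1)))
            * pad L v (j + 1) ^ 2
          = ws L j / (2 * ws L (j + 1)) * pad L v (j + 1) ^ 2 := by
        intro j hj
        rw [if_neg (by omega), Nat.add_sub_cancel]
      rw [Finset.sum_congr rfl hcong]
      simp
    rw [e3, e4, ← Finset.sum_add_distrib]
  have e5 : ∑ j ∈ Finset.range L, pad L v j * pad L v (j + 1)
      ≤ ∑ j ∈ Finset.range L,
          (ws L (j + 1) / (2 * ws L j) * pad L v j ^ 2
            + ws L j / (2 * ws L (j + 1)) * pad L v (j + 1) ^ 2) := by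
    refine Finset.sum_le_sum fun j hj => ?_
    rw [Finset.mem_range] at hj
    exact edge_ineq (ws L j) (ws L (j + 1)) (pad L v j) (pad L v (j + 1))
      (hwpos j (by omega)) (hwpos (j + 1) (by omega))
  linarith [e1, e5]


lemma sum_sq_eq (L : ℕ) (v : Fin (L + 1) → ℝ) :
    v ⬝ᵥ v = ∑ n ∈ Finset.range (L + 1), pad L v n ^ 2 := by
  rw [dotProduct, ← Fin.sum_univ_eq_sum_range (fun n => pad L v n ^ 2) (L + 1)]
  refine Finset.sum_congr rfl fun i _ => ?_
  rw [pad_coe]; ring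

lemma sum_sq_pos (L : ℕ) (v : Fin (L + 1) → ℝ) (hv : v ≠ 0) :
    0 < ∑ n ∈ Finset.range (L + 1), pad L v n ^ 2 := by
  obtain ⟨i, hi⟩ : ∃ i, v i ≠ 0 := by
    by_contra h; push_neg at h; exact hv (funext fun i => h i)
  have h1 : (0:ℝ) < pad L v (i : ℕ) ^ 2 := by
    rw [pad_coe]
    exact lt_of_le_of_ne (sq_nonneg _) (Ne.symm (pow_ne_zero 2 hi))
  exact lt_of_lt_of_le h1 (Finset.single_le_sum (f := fun n => pad L v n ^ 2)
    (fun n _ => sq_nonneg _) (by simp [i.isLt]))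

lemma eig_lower (L : ℕ) (hL : 1 ≤ L) (μ : ℝ) (v : Fin (L + 1) → ℝ)
    (hv : v ≠ 0) (heq : triMat L 1 (1 / 2) *ᵥ v = μ • v) :
    1 - Real.cos (th L) ≤ μ := by
  have hS := sum_sq_pos L v hv
  have h1 : v ⬝ᵥ (triMat L 1 (1 / 2) *ᵥ v)
      = μ * ∑ n ∈ Finset.range (L + 1), pad L v n ^ 2 := by
    rw [heq, dotProduct_smul, smul_eq_mul, sum_sq_eq]
  have h2 := qf_ge L hL v
  rw [h1] at h2
  exact le_of_mul_le_mul_right h2 hS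

end TriAux

/-- Smallest eigenvalue of `T_L(1, 1/2)`: the least eigenvalue equals `1 − cos(π/(2L+3))`;
moreover `1 − cos(π/(2L+3)) ≥ 2/(2L+3)²`, so every eigenvalue of `T_L(1,1/2)` is at least
`2/(2L+3)²`. -/
theorem triMat_one_half_least_eigenvalue (L : ℕ) (hL : 1 ≤ L) :
    IsLeast {μ : ℝ | ∃ v : Fin (L + 1) → ℝ, v ≠ 0 ∧ triMat L 1 (1 / 2) *ᵥ v = μ • v}
        (1 - Real.cos (Real.pi / (2 * (L : ℝ) + 3))) ∧
      2 / (2 * (L : ℝ) + 3) ^ 2 ≤ 1 - Real.cos (Real.pi / (2 * (L : ℝ) + 3)) ∧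
      ∀ μ ∈ {μ : ℝ | ∃ v : Fin (L + 1) → ℝ, v ≠ 0 ∧ triMat L 1 (1 / 2) *ᵥ v = μ • v},
        2 / (2 * (L : ℝ) + 3) ^ 2 ≤ μ := by
  have hth : TriAux.th L = Real.pi / (2 * (L : ℝ) + 3) := rfl
  have hnum : 2 / (2 * (L : ℝ) + 3) ^ 2
      ≤ 1 - Real.cos (Real.pi / (2 * (L : ℝ) + 3)) := by
    apply TriAux.numeric_aux
    have : (1:ℝ) ≤ (L : ℝ) := by exact_mod_cast hL
    linarith
  have hmem : (1 - Real.cos (Real.pi / (2 * (L : ℝ) + 3)))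
      ∈ {μ : ℝ | ∃ v : Fin (L + 1) → ℝ, v ≠ 0 ∧ triMat L 1 (1 / 2) *ᵥ v = μ • v} := by
    refine ⟨TriAux.evec L, TriAux.evec_ne L, ?_⟩
    rw [← hth]
    exact TriAux.evec_eig L hL
  have hlb : ∀ μ ∈ {μ : ℝ | ∃ v : Fin (L + 1) → ℝ, v ≠ 0 ∧ triMat L 1 (1 / 2) *ᵥ v = μ • v},
      1 - Real.cos (Real.pi / (2 * (L : ℝ) + 3)) ≤ μ := by
    rintro μ ⟨v, hv, heq⟩
    rw [← hth]
    exact TriAux.eig_lower L hL μ v hv heq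
  exact ⟨⟨hmem, hlb⟩, hnum, fun μ hμ => le_trans hnum (hlb μ hμ)⟩
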